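/- Let p be an odd prime and H an abelian subgroup of GL₂(𝔽ₚ) whose order is divisible by p. Then H is cyclic and is generated, up to conjugation in GL₂(𝔽ₚ), by a matrix of the form [[a,1],[0,a]] with a ∈ 𝔽ₚˣ. -/

import Mathlib

open Matrix
variable {p : ℕ} [Fact p.Prime]

lemma ch2 {R : Type*} [CommRing R] (M : Matrix (Fin 2) (Fin 2) R) :
    M * M = (M 0 0 + M 1 1) • M - M.det • 1 := by
  ext i j
  fin_cases i <;> fin_cases j <;>
    simp [Matrix.mul_apply, Fin.sum_univ_two, Matrix.det_fin_two, Matrix.one_apply] <;> ring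

lemma nilsq {B : Matrix (Fin 2) (Fin 2) (ZMod p)} (hB : B ^ p = 0) (hne : B ≠ 0) :
    B * B = 0 := by
  have hp2 : 2 ≤ p := (Fact.out : p.Prime).two_le
  have hdet : B.det = 0 := by
    have : B.det ^ p = 0 := by rw [← Matrix.det_pow, hB, Matrix.det_zero]
    exact pow_eq_zero_iff (by omega) |>.mp this
  have h2 : B * B = (B 0 0 + B 1 1) • B := by rw [ch2, hdet]; simp
  set t := B 0 0 + B 1 1 with ht
  have hpow : ∀ k : ℕ, B ^ (k + 1) = t ^ k • B := by
    intro k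
    induction k with
    | zero => simp
    | succ n ih =>
      rw [pow_succ, ih, smul_mul_assoc, h2, smul_smul, pow_succ]
  have h0 : t ^ (p - 1) • B = 0 := by
    have := hpow (p - 1)
    rw [Nat.sub_add_cancel (by omega), hB] at this
    exact this.symm
  rcases smul_eq_zero.mp h0 with h | h
  · have h' : t = 0 := pow_eq_zero_iff (by omega) |>.mp h
    rw [h2, h', zero_smul]
  · exact absurd h hne

lemma shape2 {X : Matrix (Fin 2) (Fin 2) (ZMod p)}
    (h : X * !![1, 1; 0, 1] = !![1, 1; 0, 1] * X) :
    X 1 0 = 0 ∧ X 1 1 = X 0 0 := by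
  rw [← Matrix.ext_iff] at h
  have h00 := h 0 0
  have h01 := h 0 1
  simp [Matrix.mul_apply, Fin.sum_univ_two] at h00 h01
  exact ⟨h00, by linear_combination -h01⟩

lemma powform {x y : ZMod p} (n : ℕ) :
    (!![x, y; 0, x]) ^ n = !![x ^ n, (n : ZMod p) * x ^ (n - 1) * y; 0, x ^ n] := by
  induction n with
  | zero => simp [Matrix.one_fin_two]
  | succ n ih =>
    rw [pow_succ, ih]
    ext i j
    fin_cases i <;> fin_cases j <;>
      simp [Matrix.mul_apply, Fin.sum_univ_two]
    all_goals try ring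
    rcases n with _ | m
    · simp
    · simp only [Nat.add_sub_cancel]
      push_cast
      ring

lemma conjJ {B : Matrix (Fin 2) (Fin 2) (ZMod p)} (hB2 : B * B = 0) (hne : B ≠ 0) :
    ∃ M : Matrix (Fin 2) (Fin 2) (ZMod p), M.det ≠ 0 ∧ (1 + B) * M = M * !![1, 1; 0, 1] := by
  obtain ⟨i, j, hij⟩ : ∃ i j, B i j ≠ 0 := by
    by_contra hc
    push_neg at hc
    exact hne (by ext i j; simpa using hc i j)
  set v : Fin 2 → ZMod p := Pi.single j 1 with hv
  set w : Fin 2 → ZMod p := B.mulVec v with hw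
  have hwi : w i = B i j := by
    simp [hw, hv, Matrix.mulVec_single]
  have hBw : B.mulVec w = 0 := by
    rw [hw, Matrix.mulVec_mulVec, hB2, Matrix.zero_mulVec]
  set M : Matrix (Fin 2) (Fin 2) (ZMod p) := !![w 0, v 0; w 1, v 1] with hM
  have hdet : M.det ≠ 0 := by
    intro hdet0
    rw [hM, Matrix.det_fin_two_of] at hdet0
    have key : w i • v = v i • w := by
      funext l
      fin_cases i <;> fin_cases l <;>
        try simp only [Fin.mk_zero, Fin.mk_one, Fin.isValue, Pi.smul_apply, smul_eq_mul]
      · ring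
      · exact sub_eq_zero.mp hdet0
      · rw [mul_comm (w 1) (v 0), mul_comm (v 1) (w 0)]
        exact (sub_eq_zero.mp hdet0).symm
      · ring
    have hzero : w i • w = 0 := by
      calc w i • w = B.mulVec (w i • v) := by rw [hw, Matrix.mulVec_smul]
        _ = B.mulVec (v i • w) := by rw [key]
        _ = v i • B.mulVec w := by rw [Matrix.mulVec_smul]
        _ = 0 := by rw [hBw, smul_zero]
    rcases smul_eq_zero.mp hzero with h | h
    · exact hij (hwi ▸ h)
    · exact hij (hwi ▸ (by rw [h]; rfl : w i = 0))
  refine ⟨M, hdet, ?_⟩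
  have hw0 : B 0 0 * w 0 + B 0 1 * w 1 = 0 := by
    have := congrFun hBw 0
    simpa [Matrix.mulVec, dotProduct, Fin.sum_univ_two] using this
  have hw1 : B 1 0 * w 0 + B 1 1 * w 1 = 0 := by
    have := congrFun hBw 1
    simpa [Matrix.mulVec, dotProduct, Fin.sum_univ_two] using this
  have hv0 : B 0 0 * v 0 + B 0 1 * v 1 = w 0 := by
    simp [hw, Matrix.mulVec, dotProduct, Fin.sum_univ_two]
  have hv1 : B 1 0 * v 0 + B 1 1 * v 1 = w 1 := by
    simp [hw, Matrix.mulVec, dotProduct, Fin.sum_univ_two]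
  ext k l
  fin_cases k <;> fin_cases l <;>
    simp [hM, Matrix.mul_apply, Fin.sum_univ_two, Matrix.one_apply]
  · linear_combination hw0
  · linear_combination hv0
  · linear_combination hw1
  · linear_combination hv1

lemma zpowers_cyclic {G : Type*} [Group G] (g : G) : IsCyclic (Subgroup.zpowers g) :=
  ⟨⟨⟨g, Subgroup.mem_zpowers g⟩, fun x => by
    obtain ⟨k, hk⟩ := Subgroup.mem_zpowers_iff.mp x.2
    exact Subgroup.mem_zpowers_iff.mpr ⟨k, Subtype.ext (by rw [← hk]; simp)⟩⟩⟩

/-- Let `p` be an odd prime and `H` an abelian subgroup of `GL₂(𝔽ₚ)` whose order is divisible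
by `p`.  Then `H` is cyclic and is generated, up to conjugation in `GL₂(𝔽ₚ)`, by a matrix of
the form `[[a,1],[0,a]]` with `a ∈ 𝔽ₚˣ`. -/
theorem stmt3 {p : ℕ} [Fact p.Prime] (hp : Odd p) (H : Subgroup (GL (Fin 2) (ZMod p)))
    (hab : ∀ a ∈ H, ∀ b ∈ H, a * b = b * a) (hord : p ∣ Nat.card H) :
    IsCyclic H ∧
      ∃ (M : GL (Fin 2) (ZMod p)) (g : GL (Fin 2) (ZMod p)) (a : (ZMod p)ˣ),
        (g : Matrix (Fin 2) (Fin 2) (ZMod p)) = !![(a : ZMod p), 1; 0, (a : ZMod p)] ∧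
          Subgroup.map (MulAut.conj M).toMonoidHom H = Subgroup.zpowers g := by
  classical
  have hpp : p.Prime := Fact.out
  obtain ⟨u, hu⟩ := exists_prime_orderOf_dvd_card' (G := H) p hord
  set U : GL (Fin 2) (ZMod p) := (u : GL (Fin 2) (ZMod p)) with hU
  have hUord : orderOf U = p :=
    (orderOf_injective H.subtype H.subtype_injective u).trans hu
  have hUp : U ^ p = 1 := by
    have := pow_orderOf_eq_one U; rwa [hUord] at this
  have hUne : U ≠ 1 := by
    intro h1
    rw [h1, orderOf_one] at hUord
    exact hpp.one_lt.ne hUord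
  set A : Matrix (Fin 2) (Fin 2) (ZMod p) := (U : Matrix (Fin 2) (Fin 2) (ZMod p)) with hA
  have hAp : A ^ p = 1 := by
    rw [hA, ← Units.val_pow_eq_pow_val, hUp, Units.val_one]
  have hAne : A ≠ 1 := fun h => hUne (Units.ext h)
  set B := A - 1 with hB
  have hBp : B ^ p = 0 := by
    have hc : Commute A (1 : Matrix (Fin 2) (Fin 2) (ZMod p)) := Commute.one_right A
    rw [hB, sub_pow_char_of_commute (p := p) hc, hAp, one_pow, sub_self]
  have hBne : B ≠ 0 := fun h => hAne (by rwa [hB, sub_eq_zero] at h)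
  have hB2 : B * B = 0 := nilsq hBp hBne
  obtain ⟨Mc, hMcdet, hMcconj⟩ := conjJ hB2 hBne
  set J : Matrix (Fin 2) (Fin 2) (ZMod p) := !![1, 1; 0, 1] with hJ
  have hJdet : J.det ≠ 0 := by rw [hJ, Matrix.det_fin_two_of]; norm_num
  set Jg : GL (Fin 2) (ZMod p) := Matrix.GeneralLinearGroup.mkOfDetNeZero J hJdet with hJg
  have hJgval : (Jg : Matrix (Fin 2) (Fin 2) (ZMod p)) = J := rfl
  set Mg : GL (Fin 2) (ZMod p) := Matrix.GeneralLinearGroup.mkOfDetNeZero Mc hMcdet with hMg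
  have hMgval : (Mg : Matrix (Fin 2) (Fin 2) (ZMod p)) = Mc := rfl
  have hUMg : U * Mg = Mg * Jg := by
    apply Units.ext
    rw [Units.val_mul, Units.val_mul, hMgval, hJgval]
    have hA1 : A = 1 + B := by rw [hB]; abel
    calc (U : Matrix (Fin 2) (Fin 2) (ZMod p)) * Mc = (1 + B) * Mc := by rw [← hA, hA1]
      _ = Mc * J := hMcconj
  set cH : GL (Fin 2) (ZMod p) →* GL (Fin 2) (ZMod p) := (MulAut.conj Mg⁻¹).toMonoidHom with hcH
  set H' := Subgroup.map cH H with hH'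
  have hconjU : cH U = Jg := by
    have h1 : cH U = Mg⁻¹ * U * (Mg⁻¹)⁻¹ := rfl
    rw [h1, inv_inv, mul_assoc, hUMg, ← mul_assoc, inv_mul_cancel, one_mul]
  have hJmem : Jg ∈ H' := ⟨U, u.2, hconjU⟩
  have hcomm' : ∀ x ∈ H', x * Jg = Jg * x := by
    rintro _ ⟨y, hy, rfl⟩
    rw [← hconjU, ← _root_.map_mul, ← _root_.map_mul, hab y hy U u.2]
  have hshape : ∀ x : GL (Fin 2) (ZMod p), x ∈ H' →
      ((x : Matrix (Fin 2) (Fin 2) (ZMod p)) 1 0 = 0 ∧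
       (x : Matrix (Fin 2) (Fin 2) (ZMod p)) 1 1 = (x : Matrix (Fin 2) (Fin 2) (ZMod p)) 0 0) := by
    intro x hx
    apply shape2
    rw [← hJ, ← hJgval, ← Units.val_mul, ← Units.val_mul, hcomm' x hx]
  have hdiag : ∀ x : GL (Fin 2) (ZMod p), x ∈ H' →
      (x : Matrix (Fin 2) (Fin 2) (ZMod p)) 0 0 ≠ 0 := by
    intro x hx h0
    have hdetx : ((x : Matrix (Fin 2) (Fin 2) (ZMod p)).det) ≠ 0 := by
      have h1 : IsUnit (x : Matrix (Fin 2) (Fin 2) (ZMod p)).det :=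
        (Matrix.isUnit_iff_isUnit_det _).mp x.isUnit
      exact h1.ne_zero
    apply hdetx
    rw [Matrix.det_fin_two, (hshape x hx).1, (hshape x hx).2, h0]
    ring
  have hmatform : ∀ x : GL (Fin 2) (ZMod p), x ∈ H' →
      (x : Matrix (Fin 2) (Fin 2) (ZMod p)) =
        !![(x : Matrix (Fin 2) (Fin 2) (ZMod p)) 0 0, (x : Matrix (Fin 2) (Fin 2) (ZMod p)) 0 1;
           0, (x : Matrix (Fin 2) (Fin 2) (ZMod p)) 0 0] := by
    intro x hx
    obtain ⟨h10, h11⟩ := hshape x hx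
    ext i j
    fin_cases i <;> fin_cases j <;>
      simp only [Fin.mk_zero, Fin.mk_one, Fin.isValue, Matrix.cons_val_zero, Matrix.cons_val_one,
        Matrix.head_cons, Matrix.cons_val', Matrix.empty_val', Matrix.cons_val_fin_one,
        Matrix.head_fin_const]
    exacts [rfl, rfl, h10, h11]
  set φ : H' →* (ZMod p)ˣ :=
    { toFun := fun x => Units.mk0 (((x : GL (Fin 2) (ZMod p)) : Matrix (Fin 2) (Fin 2) (ZMod p)) 0 0) (hdiag x.1 x.2)
      map_one' := by ext; simp
      map_mul' := by
        intro x y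
        ext
        have hy10 := (hshape y.1 y.2).1
        simp only [Units.val_mul, Units.val_mk0]
        rw [show ((((x * y : H') : GL (Fin 2) (ZMod p))) : Matrix (Fin 2) (Fin 2) (ZMod p))
            = ((x.1 : Matrix (Fin 2) (Fin 2) (ZMod p)) * (y.1 : Matrix (Fin 2) (Fin 2) (ZMod p))) from by
          rw [Subgroup.coe_mul, Units.val_mul]]
        rw [Matrix.mul_apply, Fin.sum_univ_two, hy10]
        ring } with hφ
  -- stage A
  have hφval : ∀ x : H', ((φ x : (ZMod p)ˣ) : ZMod p)
      = ((x : GL (Fin 2) (ZMod p)) : Matrix (Fin 2) (Fin 2) (ZMod p)) 0 0 := fun x => rfl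
  set j' : ↥H' := ⟨Jg, hJmem⟩ with hj'
  have hJgord : orderOf Jg = p := by
    rw [← hconjU, orderOf_injective cH (MulAut.conj Mg⁻¹).injective U]
    exact hUord
  have hj'ord : orderOf j' = p :=
    (orderOf_injective H'.subtype H'.subtype_injective j').symm.trans hJgord
  have hφj' : φ j' = 1 := by
    apply Units.ext
    rw [hφval]
    show J 0 0 = 1
    rw [hJ]
    norm_num
  have hj'ker : j' ∈ φ.ker := by rwa [MonoidHom.mem_ker]
  have hkerle : Nat.card φ.ker ≤ p := by
    have hinj : Function.Injective (fun x : φ.ker =>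
        ((x.1.1 : Matrix (Fin 2) (Fin 2) (ZMod p)) 0 1)) := by
      intro x y hxy
      have hx1 : ((x.1.1 : Matrix (Fin 2) (Fin 2) (ZMod p)) 0 0) = 1 := by
        have hx2 := MonoidHom.mem_ker.mp x.2
        have h3 := congrArg Units.val hx2
        rw [hφval] at h3
        simpa using h3
      have hy1 : ((y.1.1 : Matrix (Fin 2) (Fin 2) (ZMod p)) 0 0) = 1 := by
        have hy2 := MonoidHom.mem_ker.mp y.2
        have h3 := congrArg Units.val hy2
        rw [hφval] at h3
        simpa using h3
      have hxy' : ((x.1.1 : Matrix (Fin 2) (Fin 2) (ZMod p)) 0 1)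
          = ((y.1.1 : Matrix (Fin 2) (Fin 2) (ZMod p)) 0 1) := hxy
      apply Subtype.ext
      apply Subtype.ext
      apply Units.ext
      rw [hmatform x.1.1 x.1.2, hmatform y.1.1 y.1.2, hx1, hy1, hxy']
    calc Nat.card φ.ker ≤ Nat.card (ZMod p) := Nat.card_le_card_of_injective _ hinj
      _ = p := by rw [Nat.card_eq_fintype_card, ZMod.card]
  have hkerge : p ≤ Nat.card φ.ker := by
    have hle : Subgroup.zpowers j' ≤ φ.ker := Subgroup.zpowers_le.mpr hj'ker
    have hcl := Subgroup.card_le_of_le hle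
    rwa [Nat.card_zpowers, hj'ord] at hcl
  have hker : Nat.card φ.ker = p := le_antisymm hkerle hkerge
  set m := Nat.card φ.range with hm
  have hmpos : 0 < m := Nat.card_pos
  have hmdvd : m ∣ p - 1 := by
    have hdd := Subgroup.card_subgroup_dvd_card φ.range
    rwa [Nat.card_eq_fintype_card (α := (ZMod p)ˣ), ZMod.card_units] at hdd
  have hcop : Nat.Coprime p m := by
    rw [hpp.coprime_iff_not_dvd]
    intro hdvd
    have hp2 := hpp.two_le
    have h1 : m ≤ p - 1 := Nat.le_of_dvd (by omega) hmdvd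
    have h2 : p ≤ m := Nat.le_of_dvd hmpos hdvd
    omega
  have hcardH' : Nat.card H' = m * p := by
    rw [Subgroup.card_eq_card_quotient_mul_card_subgroup φ.ker, hker,
        Nat.card_congr (QuotientGroup.quotientKerEquivRange φ).toEquiv]
  -- stage B
  obtain ⟨gen, hgen⟩ := IsCyclic.exists_generator (α := φ.range)
  have hgenord : orderOf gen = m := orderOf_eq_card_of_forall_mem_zpowers hgen
  set a : (ZMod p)ˣ := gen.1 with ha
  have haord : orderOf a = m :=
    (orderOf_injective φ.range.subtype φ.range.subtype_injective gen).trans hgenord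
  have ham : (a : ZMod p) ^ m = 1 := by
    have h1 : a ^ m = 1 := by
      have := pow_orderOf_eq_one a; rwa [haord] at this
    have h2 := congrArg Units.val h1
    rwa [Units.val_pow_eq_pow_val, Units.val_one] at h2
  obtain ⟨h, hφh, hcc⟩ : ∃ x : ↥H', φ x = a ∧
      (((x : GL (Fin 2) (ZMod p)) : Matrix (Fin 2) (Fin 2) (ZMod p)) 0 1) ≠ 0 := by
    obtain ⟨h₁, hh₁⟩ := MonoidHom.mem_range.mp gen.2
    by_cases hc1 : (((h₁ : GL (Fin 2) (ZMod p)) : Matrix (Fin 2) (Fin 2) (ZMod p)) 0 1) ≠ 0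
    · exact ⟨h₁, hh₁, hc1⟩
    · push_neg at hc1
      refine ⟨h₁ * j', by rw [_root_.map_mul, hh₁, hφj', mul_one], ?_⟩
      have hval : (((h₁ * j' : ↥H') : GL (Fin 2) (ZMod p)) : Matrix (Fin 2) (Fin 2) (ZMod p))
          = ((h₁ : GL (Fin 2) (ZMod p)) : Matrix (Fin 2) (Fin 2) (ZMod p)) * J := rfl
      rw [hval, Matrix.mul_apply, Fin.sum_univ_two, hc1, hJ]
      simpa using hdiag h₁.1 h₁.2
  set cc := (((h : GL (Fin 2) (ZMod p)) : Matrix (Fin 2) (Fin 2) (ZMod p)) 0 1) with hccdef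
  have hc00 : (((h : GL (Fin 2) (ZMod p)) : Matrix (Fin 2) (Fin 2) (ZMod p)) 0 0) = (a : ZMod p) := by
    have h3 := congrArg Units.val hφh
    rwa [hφval] at h3
  have hhmat : ((h : GL (Fin 2) (ZMod p)) : Matrix (Fin 2) (Fin 2) (ZMod p))
      = !![(a : ZMod p), cc; 0, (a : ZMod p)] := by
    rw [hmatform h.1 h.2, hc00]
  have hpowh : ∀ n : ℕ, (((h ^ n : ↥H') : GL (Fin 2) (ZMod p)) : Matrix (Fin 2) (Fin 2) (ZMod p))
      = !![(a : ZMod p) ^ n, (n : ZMod p) * (a : ZMod p) ^ (n - 1) * cc; 0, (a : ZMod p) ^ n] := by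
    intro n
    rw [show ((h ^ n : ↥H') : GL (Fin 2) (ZMod p)) = ((h : GL (Fin 2) (ZMod p))) ^ n from
      SubmonoidClass.coe_pow h n]
    rw [Units.val_pow_eq_pow_val, hhmat, powform]
  have hhm : h ^ (m * p) = 1 := by
    apply Subtype.ext
    apply Units.ext
    rw [hpowh (m * p), OneMemClass.coe_one, Units.val_one]
    have h1 : (a : ZMod p) ^ (m * p) = 1 := by rw [pow_mul, ham, one_pow]
    have h2 : ((m * p : ℕ) : ZMod p) = 0 := by
      rw [Nat.cast_mul, ZMod.natCast_self, mul_zero]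
    rw [h1, h2, Matrix.one_fin_two]
    norm_num
  have hordh : orderOf h = m * p := by
    apply Nat.dvd_antisymm (orderOf_dvd_of_pow_eq_one hhm)
    have hmdvdord : m ∣ orderOf h := by
      rw [← haord, ← hφh]
      exact orderOf_map_dvd φ h
    have hpdvdord : p ∣ orderOf h := by
      have h1 : (((h ^ orderOf h : ↥H') : GL (Fin 2) (ZMod p)) : Matrix (Fin 2) (Fin 2) (ZMod p))
          = 1 := by
        rw [pow_orderOf_eq_one]; rfl
      rw [hpowh] at h1
      have h2 := congrFun (congrFun h1 0) 1
      have h2' : ((orderOf h : ℕ) : ZMod p) * (a : ZMod p) ^ (orderOf h - 1) * cc = 0 := by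
        simpa [Matrix.one_apply] using h2
      rcases mul_eq_zero.mp h2' with h3 | h3
      · rcases mul_eq_zero.mp h3 with h4 | h4
        · exact (ZMod.natCast_eq_zero_iff _ p).mp h4
        · exact absurd h4 (pow_ne_zero _ (Units.ne_zero a))
      · exact absurd h3 hcc
    exact Nat.Coprime.mul_dvd_of_dvd_of_dvd hcop.symm hmdvdord hpdvdord
  have htop : Subgroup.zpowers h = (⊤ : Subgroup ↥H') := by
    apply Subgroup.eq_top_of_card_eq
    rw [Nat.card_zpowers, hordh, hcardH']
  haveI hH'cyc : IsCyclic ↥H' := by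
    refine ⟨⟨h, fun x => ?_⟩⟩
    have hx : x ∈ Subgroup.zpowers h := by
      rw [htop]; exact Subgroup.mem_top x
    exact hx
  have hinj : Function.Injective cH := (MulAut.conj Mg⁻¹).injective
  have hcycH : IsCyclic ↥H := by
    have e : ↥H ≃* ↥H' := Subgroup.equivMapOfInjective H cH hinj
    exact isCyclic_of_surjective e.symm e.symm.surjective
  have hH'z : H' = Subgroup.zpowers ((h : GL (Fin 2) (ZMod p))) := by
    have h1 : Subgroup.map H'.subtype ⊤ = H' := by
      rw [← MonoidHom.range_eq_map, Subgroup.range_subtype]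
    calc H' = Subgroup.map H'.subtype ⊤ := h1.symm
      _ = Subgroup.map H'.subtype (Subgroup.zpowers h) := by rw [htop]
      _ = Subgroup.zpowers ((h : GL (Fin 2) (ZMod p))) := MonoidHom.map_zpowers _ _
  have hd : cc⁻¹ ≠ 0 := inv_ne_zero hcc
  have hDdet : (!![cc⁻¹, 0; 0, 1] : Matrix (Fin 2) (Fin 2) (ZMod p)).det ≠ 0 := by
    rw [Matrix.det_fin_two_of]
    simpa using hd
  have hgdet : (!![(a : ZMod p), 1; 0, (a : ZMod p)] : Matrix (Fin 2) (Fin 2) (ZMod p)).det ≠ 0 := by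
    rw [Matrix.det_fin_two_of]
    simpa using mul_ne_zero (Units.ne_zero a) (Units.ne_zero a)
  set Dg : GL (Fin 2) (ZMod p) := Matrix.GeneralLinearGroup.mkOfDetNeZero _ hDdet with hDgdef
  set gg : GL (Fin 2) (ZMod p) := Matrix.GeneralLinearGroup.mkOfDetNeZero _ hgdet with hggdef
  have hDh : Dg * (h : GL (Fin 2) (ZMod p)) = gg * Dg := by
    apply Units.ext
    rw [Units.val_mul, Units.val_mul]
    show !![cc⁻¹, 0; 0, 1] * ((h : GL (Fin 2) (ZMod p)) : Matrix (Fin 2) (Fin 2) (ZMod p))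
        = !![(a : ZMod p), 1; 0, (a : ZMod p)] * !![cc⁻¹, 0; 0, 1]
    rw [hhmat]
    ext i j
    fin_cases i <;> fin_cases j <;>
      simp [Matrix.mul_apply, Fin.sum_univ_two]
    all_goals try ring
    all_goals try exact inv_mul_cancel₀ hcc
    all_goals try exact mul_comm _ _
    all_goals try exact mul_inv_cancel₀ hcc
  refine ⟨hcycH, Dg * Mg⁻¹, gg, a, rfl, ?_⟩
  have hsplit : (MulAut.conj (Dg * Mg⁻¹)).toMonoidHom
      = ((MulAut.conj Dg).toMonoidHom).comp cH := by
    ext x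
    simp only [MonoidHom.comp_apply, MulEquiv.coe_toMonoidHom, MulAut.conj_apply, hcH,
      _root_.mul_inv_rev, inv_inv]
    group
  rw [hsplit, ← Subgroup.map_map, ← hH', hH'z, MonoidHom.map_zpowers]
  congr 1
  show Dg * (h : GL (Fin 2) (ZMod p)) * Dg⁻¹ = gg
  rw [hDh, mul_assoc, mul_inv_cancel, mul_one]
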